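/- Let q be an integer with 1 ≤ q ≤ n and m ≥ 1 an integer. The set B_m of m-tuples (R_1, …, R_m) of pairwise distinct q-element subsets of {1, …, n} such that Ψ_{R_1} Ψ_{R_2} ⋯ Ψ_{R_m} = I or Ψ_{R_1} Ψ_{R_2} ⋯ Ψ_{R_m} = −I has cardinality at most C(n,q)^{m−1}. -/

import Mathlib

open Matrix BigOperators
open scoped Classical symmDiff

/-- Ordered product `Ψ_A = ψ_{i_1} ⋯ ψ_{i_m}` over a subset `A = {i_1 < ⋯ < i_m}`. -/
noncomputable def PsiProd {n : ℕ} {L : Type*} [Fintype L] [DecidableEq L]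
    (ψ : Fin n → Matrix L L ℂ) (A : Finset (Fin n)) : Matrix L L ℂ :=
  ((A.sort (· ≤ ·)).map ψ).prod

section Aux
variable {n : ℕ} {L : Type*} [Fintype L] [DecidableEq L]
variable {ψ : Fin n → Matrix L L ℂ}

/-- products over permuted lists agree up to sign -/
lemma perm_sign (hsq : ∀ i, ψ i * ψ i = 1)
    (hanti : ∀ i j, i ≠ j → ψ i * ψ j = -(ψ j * ψ i))
    {l₁ l₂ : List (Fin n)} (h : l₁.Perm l₂) :
    ∃ ε : ℂ, (ε = 1 ∨ ε = -1) ∧ (l₁.map ψ).prod = ε • (l₂.map ψ).prod := by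
  induction h with
  | nil => exact ⟨1, Or.inl rfl, (one_smul _ _).symm⟩
  | cons x h ih =>
      obtain ⟨ε, hε, hp⟩ := ih
      refine ⟨ε, hε, ?_⟩
      simp only [List.map_cons, List.prod_cons, hp, Matrix.mul_smul]
  | swap x y l =>
      by_cases hxy : y = x
      · subst hxy; exact ⟨1, Or.inl rfl, (one_smul _ _).symm⟩
      · refine ⟨-1, Or.inr rfl, ?_⟩
        simp only [List.map_cons, List.prod_cons, ← mul_assoc, hanti y x hxy]
        simp [Matrix.mul_smul]
  | trans h₁ h₂ ih₁ ih₂ =>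
      obtain ⟨ε₁, hε₁, hp₁⟩ := ih₁
      obtain ⟨ε₂, hε₂, hp₂⟩ := ih₂
      refine ⟨ε₁ * ε₂, ?_, by rw [hp₁, hp₂, smul_smul]⟩
      rcases hε₁ with h | h <;> rcases hε₂ with h' | h' <;> simp [h, h']

lemma reduce_to_odds (hsq : ∀ i, ψ i * ψ i = 1)
    (hanti : ∀ i j, i ≠ j → ψ i * ψ j = -(ψ j * ψ i)) (l : List (Fin n)) :
    ∃ ε : ℂ, (ε = 1 ∨ ε = -1) ∧
      (l.map ψ).prod = ε • PsiProd ψ (Finset.univ.filter fun i => Odd (l.count i)) := by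
  suffices H : ∀ N (l : List (Fin n)), l.length = N →
      ∃ ε : ℂ, (ε = 1 ∨ ε = -1) ∧
      (l.map ψ).prod = ε • PsiProd ψ (Finset.univ.filter fun i => Odd (l.count i)) from
    H l.length l rfl
  intro N
  induction N using Nat.strong_induction_on with
  | _ N ih =>
  intro l hl
  by_cases hnd : l.Nodup
  · have hperm : l.Perm (l.toFinset.sort (· ≤ ·)) := by
      exact ((List.toFinset_toList hnd).symm.trans (Finset.sort_perm_toList _ _).symm)
    obtain ⟨ε, hε, hp⟩ := perm_sign hsq hanti hperm
    refine ⟨ε, hε, ?_⟩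
    have hodds : (Finset.univ.filter fun i => Odd (l.count i)) = l.toFinset := by
      ext i
      simp only [Finset.mem_filter, Finset.mem_univ, true_and, List.mem_toFinset]
      constructor
      · intro h
        by_contra hi
        rw [List.count_eq_zero_of_not_mem hi] at h
        simp at h
      · intro hi
        have h1 : l.count i = 1 := le_antisymm (List.nodup_iff_count_le_one.mp hnd i)
          (List.count_pos_iff.mpr hi)
        rw [h1]; exact odd_one
    rw [hodds, PsiProd, hp]
  · obtain ⟨i, hi2⟩ : ∃ i, 2 ≤ l.count i := by
      by_contra h
      push_neg at h
      exact hnd (List.nodup_iff_count_le_one.mpr fun a => Nat.lt_succ_iff.mp (h a))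
    have hil : i ∈ l := List.count_pos_iff.mp (by omega)
    have hil' : i ∈ l.erase i := by
      rw [← List.count_pos_iff, List.count_erase_self]; omega
    have hperm : l.Perm (i :: i :: (l.erase i).erase i) :=
      (List.perm_cons_erase hil).trans ((List.perm_cons_erase hil').cons i)
    set l'' := (l.erase i).erase i with hl''
    obtain ⟨ε, hε, hp⟩ := perm_sign hsq hanti hperm
    have hlen : l''.length = l.length - 2 := by
      rw [hl'', List.length_erase_of_mem hil', List.length_erase_of_mem hil]; omega
    have hlt : l''.length < N := by
      have := l.length_pos_of_mem hil; omega
    obtain ⟨ε', hε', hp'⟩ := ih l''.length hlt l'' rfl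
    have hcount : ∀ j, Odd (l.count j) ↔ Odd (l''.count j) := by
      intro j
      by_cases hj : j = i
      · subst hj
        rw [hl'', List.count_erase_self, List.count_erase_self]
        constructor
        · rintro ⟨c, hc⟩; exact ⟨c - 1, by omega⟩
        · rintro ⟨c, hc⟩; exact ⟨c + 1, by omega⟩
      · rw [hl'', List.count_erase_of_ne hj, List.count_erase_of_ne hj]
    have hsets : (Finset.univ.filter fun j => Odd (l.count j)) =
        (Finset.univ.filter fun j => Odd (l''.count j)) := by
      ext j; simp [hcount j]
    refine ⟨ε * ε', ?_, ?_⟩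
    · rcases hε with h | h <;> rcases hε' with h' | h' <;> simp [h, h']
    · rw [hsets, hp]
      simp only [List.map_cons, List.prod_cons, ← mul_assoc, hsq i, one_mul]
      rw [hp', smul_smul]

/-- Ψ_A Ψ_B = ± Ψ_{A ∆ B} -/
lemma psi_mul (hsq : ∀ i, ψ i * ψ i = 1)
    (hanti : ∀ i j, i ≠ j → ψ i * ψ j = -(ψ j * ψ i)) (A B : Finset (Fin n)) :
    ∃ ε : ℂ, (ε = 1 ∨ ε = -1) ∧
      PsiProd ψ A * PsiProd ψ B = ε • PsiProd ψ (A ∆ B) := by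
  obtain ⟨ε, hε, hp⟩ := reduce_to_odds hsq hanti (A.sort (· ≤ ·) ++ B.sort (· ≤ ·))
  refine ⟨ε, hε, ?_⟩
  have h1 : PsiProd ψ A * PsiProd ψ B =
      (((A.sort (· ≤ ·) ++ B.sort (· ≤ ·))).map ψ).prod := by
    rw [List.map_append, List.prod_append]; rfl
  have h2 : (Finset.univ.filter fun i => Odd ((A.sort (· ≤ ·) ++ B.sort (· ≤ ·)).count i))
      = A ∆ B := by
    ext i
    simp only [Finset.mem_filter, Finset.mem_univ, true_and, List.count_append]
    have hA : (A.sort (· ≤ ·)).count i = if i ∈ A then 1 else 0 := by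
      split_ifs with h
      · exact le_antisymm (List.nodup_iff_count_le_one.mp (A.sort_nodup _) i)
          (List.count_pos_iff.mpr ((Finset.mem_sort _).mpr h))
      · exact List.count_eq_zero_of_not_mem (fun hc => h ((Finset.mem_sort _).mp hc))
    have hB : (B.sort (· ≤ ·)).count i = if i ∈ B then 1 else 0 := by
      split_ifs with h
      · exact le_antisymm (List.nodup_iff_count_le_one.mp (B.sort_nodup _) i)
          (List.count_pos_iff.mpr ((Finset.mem_sort _).mpr h))
      · exact List.count_eq_zero_of_not_mem (fun hc => h ((Finset.mem_sort _).mp hc))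
    rw [hA, hB, Finset.mem_symmDiff]
    by_cases h1 : i ∈ A <;> by_cases h2 : i ∈ B <;> simp [h1, h2]
  rw [h1, hp, h2]

lemma psi_empty : PsiProd ψ (∅ : Finset (Fin n)) = 1 := by
  simp [PsiProd]

lemma fold_symmDiff (hsq : ∀ i, ψ i * ψ i = 1)
    (hanti : ∀ i j, i ≠ j → ψ i * ψ j = -(ψ j * ψ i)) (l : List (Finset (Fin n))) :
    ∃ ε : ℂ, (ε = 1 ∨ ε = -1) ∧
      (l.map (PsiProd ψ)).prod = ε • PsiProd ψ (l.foldr (· ∆ ·) ∅) := by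
  induction l with
  | nil => exact ⟨1, Or.inl rfl, by simp [psi_empty]⟩
  | cons A t ih =>
      obtain ⟨ε, hε, hp⟩ := ih
      obtain ⟨ε', hε', hp'⟩ := psi_mul hsq hanti A (t.foldr (· ∆ ·) ∅)
      refine ⟨ε * ε', ?_, ?_⟩
      · rcases hε with h | h <;> rcases hε' with h' | h' <;> simp [h, h']
      · simp only [List.map_cons, List.prod_cons, List.foldr_cons, hp,
          Matrix.mul_smul, hp', smul_smul, mul_comm]

/-- moving ψ j across a list not containing j -/
lemma move_not_mem (hsq : ∀ i, ψ i * ψ i = 1)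
    (hanti : ∀ i j, i ≠ j → ψ i * ψ j = -(ψ j * ψ i))
    (l : List (Fin n)) (j : Fin n) (hj : j ∉ l) :
    ψ j * (l.map ψ).prod = ((-1 : ℂ) ^ l.length) • ((l.map ψ).prod * ψ j) := by
  induction l with
  | nil => simp
  | cons x t ih =>
      have hjx : j ≠ x := fun h => hj (h ▸ (List.mem_cons_self : x ∈ x :: t))
      have hjt : j ∉ t := fun h => hj (List.mem_cons_of_mem x h)
      simp only [List.map_cons, List.prod_cons, List.length_cons]
      rw [← mul_assoc, hanti j x hjx, neg_mul, mul_assoc, ih hjt, Matrix.mul_smul,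
        ← neg_smul, pow_succ, mul_assoc]
      congr 1
      ring
/-- moving ψ j across a nodup list containing j -/

lemma move_mem (hsq : ∀ i, ψ i * ψ i = 1)
    (hanti : ∀ i j, i ≠ j → ψ i * ψ j = -(ψ j * ψ i))
    (l : List (Fin n)) (hnd : l.Nodup) (j : Fin n) (hj : j ∈ l) :
    ψ j * (l.map ψ).prod = ((-1 : ℂ) ^ (l.length - 1)) • ((l.map ψ).prod * ψ j) := by
  induction l with
  | nil => simp at hj
  | cons x t ih =>
      simp only [List.map_cons, List.prod_cons, List.length_cons, Nat.add_sub_cancel]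
      rcases List.mem_cons.mp hj with h | h
      · subst h
        have hjt : j ∉ t := (List.nodup_cons.mp hnd).1
        rw [← mul_assoc, hsq j, one_mul, move_not_mem hsq hanti t j hjt,
          Matrix.smul_mul, smul_smul, ← pow_add, mul_assoc, hsq j, mul_one]
        have : (-1 : ℂ) ^ (t.length + t.length) = 1 := by
          rw [← two_mul, pow_mul]; norm_num
        rw [this, one_smul]
      · have hjx : j ≠ x := fun he => (List.nodup_cons.mp hnd).1 (he ▸ h)
        have htnd : t.Nodup := (List.nodup_cons.mp hnd).2
        have htlen : 1 ≤ t.length := List.length_pos_of_mem h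
        obtain ⟨a, ha⟩ : ∃ a, t.length = a + 1 := ⟨t.length - 1, by omega⟩
        have ih' := ih htnd h
        rw [ha, Nat.add_sub_cancel] at ih'
        rw [ha]
        rw [← mul_assoc, hanti j x hjx, neg_mul, mul_assoc, ih', Matrix.mul_smul,
          pow_succ, mul_neg_one, neg_smul, mul_assoc]
end Aux

section Scalar
variable {n : ℕ} {L : Type*} [Fintype L] [DecidableEq L] [Nonempty L]
variable {ψ : Fin n → Matrix L L ℂ}

lemma psi_scalar_empty (hsq : ∀ i, ψ i * ψ i = 1)
    (hanti : ∀ i j, i ≠ j → ψ i * ψ j = -(ψ j * ψ i))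
    (hn : Even n) (c : ℂ) (hc : c = 1 ∨ c = -1)
    (S : Finset (Fin n)) (hS : PsiProd ψ S = c • 1) : S = ∅ := by
  by_contra hne
  have hcard : 0 < S.card := Finset.card_pos.mpr (Finset.nonempty_iff_ne_empty.mpr hne)
  have hc0 : c ≠ 0 := by rcases hc with h | h <;> simp [h]
  have hpsi0 : ∀ j, ψ j ≠ 0 := by
    intro j h0
    have := hsq j
    rw [h0, zero_mul] at this
    exact one_ne_zero this.symm
  have key : ∃ j, ψ j * PsiProd ψ S = (-1 : ℂ) • (PsiProd ψ S * ψ j) := by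
    by_cases hpar : Even S.card
    · obtain ⟨j, hj⟩ := Finset.card_pos.mp hcard
      refine ⟨j, ?_⟩
      have := move_mem hsq hanti (S.sort (· ≤ ·)) (S.sort_nodup _) j
        ((Finset.mem_sort _).mpr hj)
      rw [Finset.length_sort] at this
      have hodd : Odd (S.card - 1) := by
        rcases hpar with ⟨w, hw⟩
        exact ⟨w - 1, by omega⟩
      rw [PsiProd, this, hodd.neg_one_pow]
    · obtain ⟨j, hj⟩ : ∃ j, j ∉ S := by
        by_contra h
        push_neg at h
        have : S = Finset.univ := Finset.eq_univ_iff_forall.mpr h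
        rw [this, Finset.card_univ, Fintype.card_fin] at hpar
        exact hpar hn
      refine ⟨j, ?_⟩
      have hjl : j ∉ S.sort (· ≤ ·) := fun hm => hj ((Finset.mem_sort _).mp hm)
      have := move_not_mem hsq hanti (S.sort (· ≤ ·)) j hjl
      rw [Finset.length_sort] at this
      have hodd : Odd S.card := Nat.not_even_iff_odd.mp hpar
      rw [PsiProd, this, hodd.neg_one_pow]
  obtain ⟨j, hjkey⟩ := key
  rw [hS] at hjkey
  have h1 : ψ j * (c • (1 : Matrix L L ℂ)) = c • ψ j := by
    rw [Matrix.mul_smul, mul_one]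
  have h2 : (c • (1 : Matrix L L ℂ)) * ψ j = c • ψ j := by
    rw [Matrix.smul_mul, one_mul]
  rw [h1, h2, neg_one_smul] at hjkey
  have h0 : (2 * c) • ψ j = 0 := by
    rw [two_mul, add_smul]
    nth_rewrite 1 [hjkey]
    simp
  have h2c : (2 : ℂ) * c ≠ 0 := mul_ne_zero two_ne_zero hc0
  exact hpsi0 j (by rwa [smul_eq_zero_iff_right h2c] at h0)

end Scalar

lemma foldr_symmDiff_concat {α : Type*} [DecidableEq α] (l : List (Finset α)) (a : Finset α) :
    (l ++ [a]).foldr (· ∆ ·) ∅ = (l.foldr (· ∆ ·) ∅) ∆ a := by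
  induction l with
  | nil => simp only [List.nil_append, List.foldr_cons, List.foldr_nil]; rw [symmDiff_comm]
  | cons x t ih => simp only [List.cons_append, List.foldr_cons, ih, symmDiff_assoc]

theorem stmt13 (n : ℕ) (hn0 : 0 < n) (hn : Even n)
    (ψ : Fin n → Matrix (Fin (2 ^ (n / 2))) (Fin (2 ^ (n / 2))) ℂ)
    (hherm : ∀ i, (ψ i).IsHermitian)
    (hclif : ∀ i j, ψ i * ψ j + ψ j * ψ i =
      if i = j then (2 : ℂ) • (1 : Matrix (Fin (2 ^ (n / 2))) (Fin (2 ^ (n / 2))) ℂ) else 0)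
    (q : ℕ) (hq : 1 ≤ q) (hqn : q ≤ n) (m : ℕ) (hm : 1 ≤ m) :
    (Finset.univ.filter fun R : Fin m → Finset (Fin n) =>
        (∀ i, (R i).card = q) ∧ Function.Injective R ∧
          ((List.ofFn fun i => PsiProd ψ (R i)).prod = 1 ∨
            (List.ofFn fun i => PsiProd ψ (R i)).prod = -1)).card ≤
      (n.choose q) ^ (m - 1) := by
  have hsq : ∀ i, ψ i * ψ i = 1 := by
    intro i
    have := hclif i i
    simp only [if_pos rfl] at this
    have h2 : (2 : ℂ) • (ψ i * ψ i) = (2 : ℂ) • (1 : Matrix _ _ ℂ) := by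
      rw [two_smul]; exact this
    exact smul_right_injective _ two_ne_zero h2
  have hanti : ∀ i j, i ≠ j → ψ i * ψ j = -(ψ j * ψ i) := by
    intro i j hij
    have := hclif i j
    rw [if_neg hij] at this
    linear_combination (norm := abel) this
  obtain ⟨k, rfl⟩ : ∃ k, m = k + 1 := ⟨m - 1, by omega⟩
  simp only [Nat.add_sub_cancel]
  have hdet : ∀ R : Fin (k + 1) → Finset (Fin n),
      ((List.ofFn fun i => PsiProd ψ (R i)).prod = 1 ∨
        (List.ofFn fun i => PsiProd ψ (R i)).prod = -1) →
      R (Fin.last k) = (List.ofFn fun i : Fin k => R i.castSucc).foldr (· ∆ ·) ∅ := by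
    intro R hprod
    have hmap : (List.ofFn fun i => PsiProd ψ (R i)) = (List.ofFn R).map (PsiProd ψ) := by
      rw [List.map_ofFn]; rfl
    obtain ⟨ε, hε, hp⟩ := fold_symmDiff hsq hanti (List.ofFn R)
    rw [hmap, hp] at hprod
    set S := (List.ofFn R).foldr (· ∆ ·) ∅ with hSdef
    have hscal : ∃ c : ℂ, (c = 1 ∨ c = -1) ∧ PsiProd ψ S = c • 1 := by
      rcases hprod with h | h
      · refine ⟨ε, hε, ?_⟩
        rcases hε with he | he <;> subst he
        · rw [one_smul] at h; rw [h, one_smul]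
        · rw [neg_one_smul, neg_eq_iff_eq_neg] at h
          rw [h]; simp
      · refine ⟨-ε, ?_, ?_⟩
        · rcases hε with he | he <;> simp [he]
        · rcases hε with he | he <;> subst he
          · rw [one_smul] at h; rw [h]; simp
          · rw [neg_one_smul, neg_eq_iff_eq_neg, neg_neg] at h
            rw [h]; simp
    obtain ⟨c, hc, hpsiS⟩ := hscal
    have hSempty : S = ∅ := psi_scalar_empty hsq hanti hn c hc S hpsiS
    have hsplit : (List.ofFn R) =
        (List.ofFn fun i : Fin k => R i.castSucc) ++ [R (Fin.last k)] := by
      rw [List.ofFn_succ' R, List.concat_eq_append]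
    rw [hSdef, hsplit, foldr_symmDiff_concat] at hSempty
    exact (symmDiff_eq_bot.mp hSempty).symm
  set T := (Finset.univ.filter fun R : Fin (k + 1) → Finset (Fin n) =>
        (∀ i, (R i).card = q) ∧ Function.Injective R ∧
          ((List.ofFn fun i => PsiProd ψ (R i)).prod = 1 ∨
            (List.ofFn fun i => PsiProd ψ (R i)).prod = -1)) with hT
  have hinj : Set.InjOn (fun R : Fin (k + 1) → Finset (Fin n) =>
      fun i : Fin k => R i.castSucc) T := by
    intro R hR R' hR' heq
    simp only [hT, Finset.coe_filter, Set.mem_setOf_eq, Finset.mem_univ, true_and] at hR hR'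
    have hfront : ∀ i : Fin k, R i.castSucc = R' i.castSucc := fun i => congrFun heq i
    have hlast : R (Fin.last k) = R' (Fin.last k) := by
      rw [hdet R hR.2.2, hdet R' hR'.2.2]
      congr 1
      rw [show (fun i : Fin k => R i.castSucc) = fun i : Fin k => R' i.castSucc from
        funext hfront]
    funext i
    rcases Fin.eq_castSucc_or_eq_last i with ⟨j, rfl⟩ | rfl
    · exact hfront j
    · exact hlast
  calc T.card ≤ (Fintype.piFinset fun _ : Fin k =>
        (Finset.univ : Finset (Fin n)).powersetCard q).card := by
        refine Finset.card_le_card_of_injOn _ ?_ hinj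
        intro R hR
        simp only [hT, Finset.mem_coe, Finset.mem_filter, Finset.mem_univ, true_and] at hR
        rw [Finset.mem_coe, Fintype.mem_piFinset]
        intro i
        rw [Finset.mem_powersetCard_univ]
        exact hR.1 i.castSucc
    _ = (n.choose q) ^ k := by
        rw [Fintype.card_piFinset]
        simp only [Finset.card_powersetCard, Finset.card_univ, Fintype.card_fin]
        rw [Finset.prod_const, Finset.card_univ, Fintype.card_fin]
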